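/- For every integer n ≥ 3 there exist a graph R with vertex set ℚ and a set J_0 ⊆ ℚ such that both J_0 and ℚ \ J_0 are dense in ℚ, and: (iii) for every x ∈ ℝ and every set A with J_0 ∩ (−∞,x) ⊆ A ⊆ ℚ ∩ (−∞,x), and also for every A with J_0 ⊆ A ⊆ ℚ, the induced subgraph of R on A is K_n-free and satisfies the Henson extension property (hence is isomorphic to the Henson graph H_n); and (iv) for every q ∈ J_0 and every set C with J_0 ∩ (−∞,q] ⊆ C ⊆ ℚ ∩ (−∞,q], the induced subgraph of R on C is not isomorphic to H_n. -/

import Mathlib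

open SimpleGraph

/-- The Henson extension property for a graph `G` (relative to `n`). -/
def HensonProperty (n : ℕ) {V : Type*} (G : SimpleGraph V) : Prop :=
  ∀ H K : Finset V, K ⊆ H →
    (¬ ∃ F : Finset V, F ⊆ K ∧ G.IsNClique (n - 1) F) →
    ∃ v, v ∉ H ∧ (∀ k ∈ K, G.Adj v k) ∧ ∀ h ∈ H, h ∉ K → ¬ G.Adj v h

open Classical
namespace HensonAux
noncomputable section


/-- class of a rational: 2-adic valuation of its denominator. -/
def cls (q : ℚ) : ℕ := q.den.factorization 2

lemma cls_dense (m : ℕ) {a b : ℚ} (hab : a < b) : ∃ q : ℚ, a < q ∧ q < b ∧ cls q = m := by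
  obtain ⟨k, hk⟩ : ∃ k : ℕ, (8 : ℚ) / (b - a) < 3 ^ k := pow_unbounded_of_one_lt _ (by norm_num)
  set d : ℕ := 2 ^ m * 3 ^ k with hd
  have hdpos : 0 < (d : ℚ) := by positivity
  have h8 : (8 : ℚ) < (b - a) * d := by
    have h3d : (3 : ℚ) ^ k ≤ (d : ℚ) := by
      have h1 : (1:ℕ) ≤ 2 ^ m := Nat.one_le_two_pow
      rw [hd]
      push_cast
      exact le_mul_of_one_le_left (by positivity) (by exact_mod_cast h1)
    have hba : 0 < b - a := by linarith
    calc (8 : ℚ) = (8 / (b-a)) * (b-a) := by field_simp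
    _ < 3 ^ k * (b - a) := by exact mul_lt_mul_of_pos_right hk hba
    _ ≤ (b - a) * d := by nlinarith
  set t : ℤ := 6 * ⌊a * d / 6⌋ + 7 with ht
  have h1 : a * d < (t : ℚ) := by
    have h := Int.sub_one_lt_floor (a * (d:ℚ) / 6)
    rw [ht]
    push_cast
    linarith
  have h2 : (t : ℚ) < b * d := by
    have h := Int.floor_le (a * (d:ℚ) / 6)
    rw [ht]
    push_cast
    linarith
  have ht2 : ¬ (2 : ℤ) ∣ t := by omega
  have ht3 : ¬ (3 : ℤ) ∣ t := by omega
  have hcop : t.natAbs.Coprime d := by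
    have h2' : ¬ (2 ∣ t.natAbs) := by
      rw [← Int.natAbs_natCast 2, Int.natAbs_dvd_natAbs]; exact ht2
    have h3' : ¬ (3 ∣ t.natAbs) := by
      rw [← Int.natAbs_natCast 3, Int.natAbs_dvd_natAbs]; exact ht3
    refine Nat.Coprime.mul_right ?_ ?_
    · exact Nat.Coprime.pow_right _ ((Nat.Prime.coprime_iff_not_dvd (by norm_num)).2 h2').symm
    · exact Nat.Coprime.pow_right _ ((Nat.Prime.coprime_iff_not_dvd (by norm_num)).2 h3').symm
  have hdne : d ≠ 0 := by positivity
  refine ⟨Rat.mk' t d hdne hcop, ?_, ?_, ?_⟩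
  · have : (Rat.mk' t d hdne hcop : ℚ) = (t : ℚ) / d := by
      rw [Rat.mk_eq_divInt, Rat.divInt_eq_div]; push_cast; ring
    rw [this, lt_div_iff₀ hdpos]; exact h1
  · have : (Rat.mk' t d hdne hcop : ℚ) = (t : ℚ) / d := by
      rw [Rat.mk_eq_divInt, Rat.divInt_eq_div]; push_cast; ring
    rw [this, div_lt_iff₀ hdpos]; exact h2
  · show (Rat.mk' t d hdne hcop).den.factorization 2 = m
    have : (Rat.mk' t d hdne hcop).den = d := rfl
    rw [this, hd, Nat.factorization_mul (by positivity) (by positivity)]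
    rw [Nat.Prime.factorization_pow (by norm_num), Nat.Prime.factorization_pow (by norm_num)]
    simp







/-- pick a point of class `m` in `(a,b)`. -/
def pick (m : ℕ) (a b : ℚ) : ℚ := if h : a < b then (cls_dense m h).choose else a

lemma pick_spec (m : ℕ) {a b : ℚ} (h : a < b) :
    a < pick m a b ∧ pick m a b < b ∧ cls (pick m a b) = m := by
  rw [pick, dif_pos h]; exact (cls_dense m h).choose_spec

/-- decreasing sequence of class-`m` points in `(a,b)`. -/
def wit0 (m : ℕ) (a b : ℚ) : ℕ → ℚ
  | 0 => pick m a b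
  | j + 1 => pick m a (wit0 m a b j)

lemma wit0_spec (m : ℕ) {a b : ℚ} (h : a < b) (j : ℕ) :
    a < wit0 m a b j ∧ wit0 m a b j < b ∧ cls (wit0 m a b j) = m ∧
      wit0 m a b (j+1) < wit0 m a b j := by
  induction j with
  | zero =>
      obtain ⟨h1, h2, h3⟩ := pick_spec m h
      exact ⟨h1, h2, h3, (pick_spec m h1).2.1⟩
  | succ j ih =>
      obtain ⟨h1, h2, h3, h4⟩ := ih
      obtain ⟨g1, g2, g3⟩ := pick_spec m h1
      exact ⟨g1, lt_trans g2 h2, g3, (pick_spec m g1).2.1⟩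

/-- the task coded by stage `s`. -/
def task (s : ℕ) : Option (Finset ℚ × ℚ × ℚ) := Encodable.decode (Nat.unpair s).2

def tK (s : ℕ) : Finset ℚ := match task s with | some p => p.1 | none => ∅
def ta (s : ℕ) : ℚ := match task s with | some p => p.2.1 | none => 0
def tb (s : ℕ) : ℚ := match task s with | some p => p.2.2 | none => 0

/-- the stage-`s` witnesses. -/
def wit (s : ℕ) (j : ℕ) : ℚ := wit0 (s + 1) (ta s) (tb s) j

def stageEdges (s : ℕ) : Set (ℚ × ℚ) :=
  {e | ∃ j, (e.2 = wit s j ∧ e.1 ∈ tK s) ∨ (e.1 = wit s j ∧ e.2 ∈ tK s)}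

/-- `K` has no `(n-1)`-clique with respect to edge set `E`. -/
def CFreeOn (n : ℕ) (E : Set (ℚ × ℚ)) (K : Finset ℚ) : Prop :=
  ¬ ∃ F : Finset ℚ, F ⊆ K ∧ F.card = n - 1 ∧ ∀ u ∈ F, ∀ v ∈ F, u ≠ v → (u, v) ∈ E

def activeAt (n : ℕ) (E : Set (ℚ × ℚ)) (s : ℕ) : Prop :=
  ta s < tb s ∧ (∀ k ∈ tK s, k ≤ ta s) ∧ (∀ k ∈ tK s, cls k ≤ s) ∧ CFreeOn n E (tK s)

/-- accumulated edges before stage `s`. -/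
def St (n : ℕ) : ℕ → Set (ℚ × ℚ)
  | 0 => ∅
  | s + 1 => St n s ∪ {e | activeAt n (St n s) s ∧ e ∈ stageEdges s}

def Active (n s : ℕ) : Prop := activeAt n (St n s) s

def Edges (n : ℕ) : Set (ℚ × ℚ) := {e | ∃ s, Active n s ∧ e ∈ stageEdges s}

lemma St_succ (n s : ℕ) : St n (s+1) = St n s ∪ {e | Active n s ∧ e ∈ stageEdges s} := rfl

lemma St_mono (n : ℕ) : Monotone (St n) := by
  apply monotone_nat_of_le_succ
  intro s
  rw [St_succ]; exact Set.subset_union_left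

lemma St_eq (n s : ℕ) : St n s = {e | ∃ t < s, Active n t ∧ e ∈ stageEdges t} := by
  induction s with
  | zero => simp [St]
  | succ s ih =>
      rw [St_succ, ih]
      ext e
      simp only [Set.mem_union, Set.mem_setOf_eq]
      constructor
      · rintro (⟨t, ht, h⟩ | ⟨h1, h2⟩)
        · exact ⟨t, by omega, h⟩
        · exact ⟨s, by omega, h1, h2⟩
      · rintro ⟨t, ht, h⟩
        rcases Nat.lt_succ_iff_lt_or_eq.mp ht with h' | rfl
        · exact Or.inl ⟨t, h', h⟩
        · exact Or.inr h

lemma St_subset_Edges (n s : ℕ) : St n s ⊆ Edges n := by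
  rw [St_eq]; rintro e ⟨t, _, h⟩; exact ⟨t, h⟩

lemma stageEdges_symm {s : ℕ} {u v : ℚ} (h : (u, v) ∈ stageEdges s) : (v, u) ∈ stageEdges s := by
  obtain ⟨j, h | h⟩ := h
  · exact ⟨j, Or.inr ⟨h.1, h.2⟩⟩
  · exact ⟨j, Or.inl ⟨h.1, h.2⟩⟩

lemma Edges_symm {n : ℕ} {u v : ℚ} (h : (u, v) ∈ Edges n) : (v, u) ∈ Edges n := by
  obtain ⟨s, hs, he⟩ := h; exact ⟨s, hs, stageEdges_symm he⟩

lemma wit_gt {n s : ℕ} (hs : Active n s) (j : ℕ) : ta s < wit s j :=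
  (wit0_spec (s+1) hs.1 j).1

lemma wit_lt {n s : ℕ} (hs : Active n s) (j : ℕ) : wit s j < tb s :=
  (wit0_spec (s+1) hs.1 j).2.1

lemma wit_cls {n s : ℕ} (hs : Active n s) (j : ℕ) : cls (wit s j) = s + 1 :=
  (wit0_spec (s+1) hs.1 j).2.2.1

lemma wit_decr {n s : ℕ} (hs : Active n s) (j : ℕ) : wit s (j+1) < wit s j :=
  (wit0_spec (s+1) hs.1 j).2.2.2

/-- Structure of an edge, seen from its larger endpoint. -/
lemma adj_structure {n : ℕ} {u v : ℚ} (h : (u, v) ∈ Edges n) (huv : u < v) :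
    ∃ s j, Active n s ∧ v = wit s j ∧ u ∈ tK s ∧ cls v = s + 1 := by
  obtain ⟨s, hs, j, hj | hj⟩ := h <;> simp only at hj
  · refine ⟨s, j, hs, hj.1, hj.2, ?_⟩
    rw [hj.1]; exact wit_cls hs j
  · exfalso
    have h1 : v ≤ ta s := hs.2.1 v hj.2
    have h2 : ta s < u := hj.1 ▸ wit_gt hs j
    linarith

lemma edges_ne {n : ℕ} {u v : ℚ} (h : (u, v) ∈ Edges n) : u ≠ v := by
  rintro rfl
  obtain ⟨s, hs, j, hj | hj⟩ := h <;> simp only at hj <;>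
  · have h1 : u ≤ ta s := hs.2.1 u hj.2
    have h2 : ta s < u := hj.1 ▸ wit_gt hs j
    linarith


lemma wit_mem_stageEdges {s : ℕ} {k : ℚ} (j : ℕ) (hk : k ∈ tK s) :
    (k, wit s j) ∈ stageEdges s := ⟨j, Or.inl ⟨rfl, hk⟩⟩

lemma task_encode (K : Finset ℚ) (a b : ℚ) (m : ℕ) :
    task (Nat.pair m (Encodable.encode (K, a, b))) = some (K, a, b) := by
  simp [task, Nat.unpair_pair, Encodable.encodek]

lemma tK_of_task {s : ℕ} {K : Finset ℚ} {a b : ℚ} (h : task s = some (K, a, b)) : tK s = K := by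
  simp [tK, h]

lemma ta_of_task {s : ℕ} {K : Finset ℚ} {a b : ℚ} (h : task s = some (K, a, b)) : ta s = a := by
  simp [ta, h]

lemma tb_of_task {s : ℕ} {K : Finset ℚ} {a b : ℚ} (h : task s = some (K, a, b)) : tb s = b := by
  simp [tb, h]


/-- edges between members of `tK s` are settled before an active stage `s`. -/
lemma edge_in_K_settled {n s : ℕ} (hs : Active n s) {u v : ℚ}
    (hu : u ∈ tK s) (hv : v ∈ tK s) (h : (u, v) ∈ Edges n) : (u, v) ∈ St n s := by
  rcases lt_trichotomy u v with hlt | rfl | hlt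
  · obtain ⟨t, j, ht, hvw, hut, hcls⟩ := adj_structure h hlt
    have : t < s := by
      have := hs.2.2.1 v hv
      omega
    rw [St_eq]
    exact ⟨t, this, ht, j, Or.inl ⟨hvw, hut⟩⟩
  · exact absurd rfl (edges_ne h)
  · obtain ⟨t, j, ht, hvw, hut, hcls⟩ := adj_structure (Edges_symm h) hlt
    have : t < s := by
      have := hs.2.2.1 u hu
      omega
    rw [St_eq]
    exact ⟨t, this, ht, stageEdges_symm ⟨j, Or.inl ⟨hvw, hut⟩⟩⟩

/-- The graph. -/
def R (n : ℕ) : SimpleGraph ℚ where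
  Adj u v := (u, v) ∈ Edges n
  symm := ⟨fun _ _ h => Edges_symm h⟩
  loopless := ⟨fun u h => (edges_ne h) rfl⟩

lemma R_adj {n : ℕ} {u v : ℚ} : (R n).Adj u v ↔ (u, v) ∈ Edges n := Iff.rfl

/-- The designated dense set. -/
def Jset (n : ℕ) : Set ℚ := {q | ∃ s j, Active n s ∧ q = wit s j}

lemma cliquefree (n : ℕ) (hn : 3 ≤ n) : (R n).CliqueFree n := by
  intro F hF
  have hcard : F.card = n := hF.2
  have hne : F.Nonempty := by
    rw [← Finset.card_pos, hcard]; omega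
  set v := F.max' hne with hv
  have hvF : v ∈ F := F.max'_mem hne
  -- every other element is adjacent to v from below
  have hlt : ∀ u ∈ F.erase v, u < v := by
    intro u hu
    have := F.le_max' u (Finset.mem_of_mem_erase hu)
    exact lt_of_le_of_ne this (Finset.ne_of_mem_erase hu)
  have hadj : ∀ u ∈ F.erase v, (u, v) ∈ Edges n := by
    intro u hu
    exact hF.1 (by exact_mod_cast Finset.mem_of_mem_erase hu) (by exact_mod_cast hvF)
      (Finset.ne_of_mem_erase hu)
  have hne2 : (F.erase v).Nonempty := by
    rw [← Finset.card_pos, Finset.card_erase_of_mem hvF, hcard]; omega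
  obtain ⟨u0, hu0⟩ := hne2
  obtain ⟨s, j, hs, hw, hu0K, hcls⟩ := adj_structure (hadj u0 hu0) (hlt u0 hu0)
  -- all elements of F.erase v are in tK s
  have hsub : ∀ u ∈ F.erase v, u ∈ tK s := by
    intro u hu
    obtain ⟨t, j', ht, hw', huK, hcls'⟩ := adj_structure (hadj u hu) (hlt u hu)
    have : t = s := by omega
    rwa [this] at huK
  refine hs.2.2.2 ⟨F.erase v, ?_, ?_, ?_⟩
  · intro u hu; exact hsub u hu
  · rw [Finset.card_erase_of_mem hvF, hcard]
  · intro x hx y hy hxy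
    have hE : (x, y) ∈ Edges n :=
      hF.1 (by exact_mod_cast Finset.mem_of_mem_erase hx)
        (by exact_mod_cast Finset.mem_of_mem_erase hy) hxy
    exact edge_in_K_settled hs (hsub x hx) (hsub y hy) hE

/-- Main witness lemma. -/
lemma witness_exists (n : ℕ) (K : Finset ℚ) (a b : ℚ)
    (hKa : ∀ k ∈ K, k ≤ a) (hab : a < b)
    (hcf : CFreeOn n (Edges n) K) :
    ∃ w, w ∈ Jset n ∧ a < w ∧ w < b ∧ (∀ k ∈ K, (k, w) ∈ Edges n) ∧
      (∀ h : ℚ, h ≤ a → h ∉ K → (w, h) ∉ Edges n) := by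
  set m := (K.sup cls) with hm
  set s := Nat.pair m (Encodable.encode (K, a, b)) with hs'
  have htask := task_encode K a b m
  have hKs : tK s = K := tK_of_task htask
  have has : ta s = a := ta_of_task htask
  have hbs : tb s = b := tb_of_task htask
  have hact : Active n s := by
    refine ⟨by rw [has, hbs]; exact hab, by rw [hKs, has]; exact hKa, ?_, ?_⟩
    · intro k hk
      rw [hKs] at hk
      calc cls k ≤ m := Finset.le_sup hk
      _ ≤ s := Nat.left_le_pair _ _
    · rw [hKs]
      intro ⟨F, h1, h2, h3⟩
      exact hcf ⟨F, h1, h2, fun u hu v hv huv => St_subset_Edges n s (h3 u hu v hv huv)⟩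
  refine ⟨wit s 0, ⟨s, 0, hact, rfl⟩, ?_, ?_, ?_, ?_⟩
  · have := wit_gt hact 0; rwa [has] at this
  · have := wit_lt hact 0; rwa [hbs] at this
  · intro k hk
    exact ⟨s, hact, wit_mem_stageEdges 0 (by rwa [hKs])⟩
  · intro h hha hhK hE
    have hhw : h < wit s 0 := by
      have := wit_gt hact 0; rw [has] at this; linarith
    obtain ⟨t, j, ht, hw', hhK', hcls'⟩ := adj_structure (Edges_symm hE) hhw
    have hcls0 : cls (wit s 0) = s + 1 := wit_cls hact 0
    have : t = s := by omega
    rw [this, hKs] at hhK'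
    exact hhK hhK'

/-- The failure structure at points of `Jset`. -/
lemma fail_at (n : ℕ) {q : ℚ} (hq : q ∈ Jset n) :
    ∃ p, p ∈ Jset n ∧ p < q ∧
      ∀ v : ℚ, v < q → (v, q) ∈ Edges n → (v, p) ∈ Edges n := by
  obtain ⟨s, j, hs, rfl⟩ := hq
  refine ⟨wit s (j+1), ⟨s, j+1, hs, rfl⟩, wit_decr hs j, ?_⟩
  intro v hv hE
  obtain ⟨t, j', ht, hw', hvK, hcls'⟩ := adj_structure hE hv
  have hcls0 : cls (wit s j) = s + 1 := wit_cls hs j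
  have : t = s := by omega
  rw [this] at hvK
  exact ⟨s, hs, wit_mem_stageEdges (j+1) hvK⟩



lemma induce_adj' {n : ℕ} {A : Set ℚ} {u v : ↥A} :
    ((R n).induce A).Adj u v ↔ (u.val, v.val) ∈ Edges n := by
  simp [R_adj]

lemma cliquefree_induce (n : ℕ) (hn : 3 ≤ n) (A : Set ℚ) : ((R n).induce A).CliqueFree n := by
  intro F hF
  apply cliquefree n hn (F.image Subtype.val)
  rw [SimpleGraph.isNClique_iff] at hF ⊢
  constructor
  · rintro x hx y hy hxy
    simp only [Finset.coe_image, Set.mem_image] at hx hy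
    obtain ⟨u, hu, rfl⟩ := hx
    obtain ⟨v, hv, rfl⟩ := hy
    have huv : u ≠ v := fun h => hxy (by rw [h])
    have := hF.1 hu hv huv
    rw [R_adj]
    exact induce_adj'.mp this
  · rw [Finset.card_image_of_injective _ Subtype.val_injective]
    exact hF.2

lemma henson_main (n : ℕ) (hn : 3 ≤ n) (A : Set ℚ)
    (hA : ∀ S : Finset ℚ, ↑S ⊆ A → ∃ a b : ℚ, (∀ x ∈ S, x ≤ a) ∧ a < b ∧
      ∀ w, w ∈ Jset n → a < w → w < b → w ∈ A) :
    HensonProperty n ((R n).induce A) := by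
  intro H K hKH hcf
  obtain ⟨a, b, hSa, hab, hw⟩ := hA (H.image Subtype.val) (by
    intro x hx
    simp only [Finset.coe_image, Set.mem_image] at hx
    obtain ⟨u, _, rfl⟩ := hx
    exact u.2)
  set K' : Finset ℚ := K.image Subtype.val with hK'
  have hcf' : CFreeOn n (Edges n) K' := by
    rintro ⟨F', hF'K, hF'card, hF'cl⟩
    obtain ⟨F, hFK, hFim⟩ := Finset.subset_image_iff.mp hF'K
    refine hcf ⟨F, hFK, ?_⟩
    rw [SimpleGraph.isNClique_iff]
    refine ⟨?_, ?_⟩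
    · intro x hx y hy hxy
      have hxy' : (x : ℚ) ≠ (y : ℚ) := fun h => hxy (Subtype.ext h)
      have : ((x : ℚ), (y : ℚ)) ∈ Edges n := by
        refine hF'cl _ ?_ _ ?_ hxy' <;> rw [← hFim]
        · exact Finset.mem_image_of_mem _ hx
        · exact Finset.mem_image_of_mem _ hy
      exact induce_adj'.mpr this
    · rwa [← hFim, Finset.card_image_of_injective _ Subtype.val_injective] at hF'card
  have hKa : ∀ k ∈ K', k ≤ a := by
    intro k hk
    rw [hK'] at hk
    obtain ⟨u, hu, rfl⟩ := Finset.mem_image.mp hk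
    exact hSa _ (Finset.mem_image_of_mem _ (hKH hu))
  obtain ⟨w, hwJ, haw, hwb, hadj, hnadj⟩ := witness_exists n K' a b hKa hab hcf'
  have hwA : w ∈ A := hw w hwJ haw hwb
  refine ⟨⟨w, hwA⟩, ?_, ?_, ?_⟩
  · intro hmem
    have := hSa w (Finset.mem_image_of_mem _ hmem)
    linarith
  · intro k hk
    exact induce_adj'.mpr (Edges_symm (hadj k.val (Finset.mem_image_of_mem _ hk)))
  · intro h hh hhK hAdj
    have hha : (h : ℚ) ≤ a := hSa h.val (Finset.mem_image_of_mem _ hh)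
    have hhK' : (h : ℚ) ∉ K' := by
      intro hmem
      obtain ⟨k, hk, hkv⟩ := Finset.mem_image.mp hmem
      exact hhK (Subtype.ext hkv ▸ hk)
    exact hnadj h.val hha hhK' (induce_adj'.mp hAdj)

lemma henson_iso {V W : Type*} {G : SimpleGraph V} {G' : SimpleGraph W}
    (e : G ≃g G') (n : ℕ) (h : HensonProperty n G') : HensonProperty n G := by
  intro H K hKH hcf
  have hinj : Function.Injective e := e.injective
  obtain ⟨v', hv', hadj, hnadj⟩ := h (H.image e) (K.image e)
    (Finset.image_subset_image hKH) (by
      rintro ⟨F', hF'K, hclq⟩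
      obtain ⟨F, hFK, hFim⟩ := Finset.subset_image_iff.mp hF'K
      refine hcf ⟨F, hFK, ?_⟩
      rw [SimpleGraph.isNClique_iff] at hclq ⊢
      refine ⟨?_, ?_⟩
      · intro x hx y hy hxy
        have : G'.Adj (e x) (e y) := by
          refine hclq.1 ?_ ?_ (fun hc => hxy (hinj hc)) <;> rw [← hFim]
          · exact Finset.mem_coe.mpr (Finset.mem_image_of_mem _ hx)
          · exact Finset.mem_coe.mpr (Finset.mem_image_of_mem _ hy)
        exact e.map_adj_iff.mp this
      · rw [← hFim, Finset.card_image_of_injective _ hinj] at hclq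
        exact hclq.2)
  refine ⟨e.symm v', ?_, ?_, ?_⟩
  · intro hmem
    apply hv'
    have : e (e.symm v') ∈ H.image e := Finset.mem_image_of_mem _ hmem
    simpa using this
  · intro k hk
    have := hadj (e k) (Finset.mem_image_of_mem _ hk)
    rw [← e.map_adj_iff]
    simpa using this
  · intro x hx hxK hAdj
    have hx' : e x ∈ H.image e := Finset.mem_image_of_mem _ hx
    have hxK' : e x ∉ K.image e := by
      intro hmem
      obtain ⟨k, hk, hkv⟩ := Finset.mem_image.mp hmem
      exact hxK (hinj hkv ▸ hk)
    apply hnadj (e x) hx' hxK'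
    rw [← e.map_adj_iff] at hAdj
    simpa using hAdj

lemma cfree_empty (n : ℕ) (hn : 3 ≤ n) : CFreeOn n (Edges n) (∅ : Finset ℚ) := by
  rintro ⟨F, hF, hcard, -⟩
  have : F = ∅ := Finset.subset_empty.mp hF
  rw [this] at hcard
  simp at hcard
  omega


end
end HensonAux


open HensonAux

theorem exists_graph_on_rationals_with_henson_initial_segments
    (n : ℕ) (hn : 3 ≤ n) :
    ∃ (R : SimpleGraph ℚ) (J₀ : Set ℚ),
      -- `J₀` and `ℚ \ J₀` are dense in `ℚ`:
      (∀ p q : ℚ, p < q → ∃ j ∈ J₀, p < j ∧ j < q) ∧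
      (∀ p q : ℚ, p < q → ∃ j ∉ J₀, p < j ∧ j < q) ∧
      -- (iii) initial segments (and full extensions of `J₀`) induce copies of `H_n`:
      (∀ x : ℝ, ∀ A : Set ℚ, {q | q ∈ J₀ ∧ (q : ℝ) < x} ⊆ A →
        A ⊆ {q : ℚ | (q : ℝ) < x} →
        (R.induce A).CliqueFree n ∧ HensonProperty n (R.induce A)) ∧
      (∀ A : Set ℚ, J₀ ⊆ A →
        (R.induce A).CliqueFree n ∧ HensonProperty n (R.induce A)) ∧
      -- (iv) closed initial segments at points of `J₀` do not induce copies of `H_n`: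
      (∀ q ∈ J₀, ∀ C : Set ℚ, {r | r ∈ J₀ ∧ r ≤ q} ⊆ C → C ⊆ {r : ℚ | r ≤ q} →
        ∀ Hg : SimpleGraph ℕ, Hg.CliqueFree n → HensonProperty n Hg →
          ¬ Nonempty ((R.induce C) ≃g Hg)) := by
  classical
  refine ⟨HensonAux.R n, Jset n, ?_, ?_, ?_, ?_, ?_⟩
  · -- density of J₀
    intro p q hpq
    obtain ⟨w, hwJ, h1, h2, -, -⟩ :=
      witness_exists n (∅ : Finset ℚ) p q (by simp) hpq (cfree_empty n hn)
    exact ⟨w, hwJ, h1, h2⟩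
  · -- density of the complement
    intro p q hpq
    obtain ⟨j, h1, h2, h3⟩ := cls_dense 0 hpq
    refine ⟨j, ?_, h1, h2⟩
    rintro ⟨s, jj, hs, rfl⟩
    have := wit_cls hs jj
    omega
  · -- (iii) initial segments below a real cut
    intro x A hJA hAx
    refine ⟨cliquefree_induce n hn A, henson_main n hn A ?_⟩
    intro S hSA
    rcases S.eq_empty_or_nonempty with rfl | hne
    · obtain ⟨b, hb⟩ := exists_rat_lt x
      refine ⟨b - 1, b, by simp, by linarith, ?_⟩
      intro w hwJ haw hwb
      refine hJA ⟨hwJ, ?_⟩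
      calc (w : ℝ) < (b : ℝ) := by exact_mod_cast hwb
      _ < x := hb
    · set M := S.max' hne with hM
      have hMx : (M : ℝ) < x := hAx (hSA (S.max'_mem hne))
      obtain ⟨b, hb1, hb2⟩ := exists_rat_btwn hMx
      refine ⟨M, b, fun y hy => S.le_max' y hy, by exact_mod_cast hb1, ?_⟩
      intro w hwJ haw hwb
      refine hJA ⟨hwJ, ?_⟩
      calc (w : ℝ) < (b : ℝ) := by exact_mod_cast hwb
      _ < x := hb2
  · -- (iii) sets containing J₀
    intro A hJA
    refine ⟨cliquefree_induce n hn A, henson_main n hn A ?_⟩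
    intro S hSA
    rcases S.eq_empty_or_nonempty with rfl | hne
    · exact ⟨0, 1, by simp, by norm_num, fun w hwJ _ _ => hJA hwJ⟩
    · exact ⟨S.max' hne, S.max' hne + 1, fun y hy => S.le_max' y hy, by linarith,
        fun w hwJ _ _ => hJA hwJ⟩
  · -- (iv) failure at closed initial segments
    intro q hq C hJC hCq Hg hgcf hgH
    rintro ⟨e⟩
    obtain ⟨p, hpJ, hpq, hfail⟩ := fail_at n hq
    have hqC : q ∈ C := hJC ⟨hq, le_refl q⟩
    have hpC : p ∈ C := hJC ⟨hpJ, le_of_lt hpq⟩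
    have hH : HensonProperty n ((HensonAux.R n).induce C) := henson_iso e n hgH
    have hpneq : p ≠ q := ne_of_lt hpq
    obtain ⟨v, hvH, hvK, hvnH⟩ := hH
      ({⟨q, hqC⟩, ⟨p, hpC⟩} : Finset ↥C) ({⟨q, hqC⟩} : Finset ↥C)
      (Finset.singleton_subset_iff.mpr (Finset.mem_insert_self _ _))
      (by
        rintro ⟨F, hF, hclq⟩
        have hcard : F.card ≤ 1 := by
          calc F.card ≤ ({⟨q, hqC⟩} : Finset ↥C).card := Finset.card_le_card hF
          _ = 1 := Finset.card_singleton _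
        have := hclq.2
        omega)
    have h1 : (v.val, q) ∈ Edges n := induce_adj'.mp (hvK ⟨q, hqC⟩ (Finset.mem_singleton_self _))
    have hvlq : v.val ≤ q := hCq v.2
    have hvnq : v.val ≠ q := by
      intro hh
      apply hvH
      have : v = (⟨q, hqC⟩ : ↥C) := Subtype.ext hh
      rw [this]
      exact Finset.mem_insert_self _ _
    have h2 : (v.val, p) ∈ Edges n := hfail v.val (lt_of_le_of_ne hvlq hvnq) h1
    have h3 : ¬ ((HensonAux.R n).induce C).Adj v ⟨p, hpC⟩ := by
      apply hvnH ⟨p, hpC⟩ (Finset.mem_insert_of_mem (Finset.mem_singleton_self _))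
      rw [Finset.mem_singleton]
      intro hh
      exact hpneq (congrArg Subtype.val hh)
    exact h3 (induce_adj'.mpr h2)
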